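/- Let M be a model and M_∂ its dual model (same frame; a variable's value at a state is unchanged if it is exactly true or exactly false, while 'both' and 'neither' are swapped). Then for every formula φ of the language with ¬, ∧, ∨, ■, 𝐈 and every state w: if φ is exactly true (true and non-false) at w in M it is exactly true at w in M_∂; if φ is both true and false at w in M it is neither true nor false at w in M_∂; if φ is neither at w in M it is both at w in M_∂; and if φ is exactly false at w in M it is exactly false at w in M_∂. -/
import Mathlib


/-- Formulas of the language with ¬, ∧, ∨, □, ■, 𝐈 and ▲. -/
inductive Form : Type
  | var : ℕ → Form
  | neg : Form → Form
  | conj : Form → Form → Form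
  | disj : Form → Form → Form
  | box : Form → Form
  | bbox : Form → Form
  | ign : Form → Form
  | tri : Form → Form

/-- A Kripke model for Belnap–Dunn modal logic. -/
structure Model (W : Type) where
  R : W → W → Prop
  vp : ℕ → W → Prop
  vn : ℕ → W → Prop

mutual
  /-- support of truth -/
  def tr {W : Type} (M : Model W) : Form → W → Prop
    | .var n, w => M.vp n w
    | .neg φ, w => fa M φ w
    | .conj φ ψ, w => tr M φ w ∧ tr M ψ w
    | .disj φ ψ, w => tr M φ w ∨ tr M ψ w
    | .box φ, w => ∀ w', M.R w w' → tr M φ w'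
    | .bbox φ, w => (∀ w', M.R w w' → tr M φ w') ∧
        ∀ w₁ w₂, M.R w w₁ → M.R w w₂ → fa M φ w₁ → fa M φ w₂
    | .ign φ, w => tr M φ w ∧ (∀ w', M.R w w' → w' ≠ w → fa M φ w') ∧
        ∀ w₁ w₂, M.R w w₁ → w₁ ≠ w → M.R w w₂ → w₂ ≠ w → tr M φ w₁ → tr M φ w₂
    | .tri φ, w => (∀ w₁ w₂, M.R w w₁ → M.R w w₂ →
          (tr M φ w₁ → tr M φ w₂) ∧ (fa M φ w₁ → fa M φ w₂)) ∧
        ∀ w', M.R w w' → tr M φ w' ∨ fa M φ w'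
  /-- support of falsity -/
  def fa {W : Type} (M : Model W) : Form → W → Prop
    | .var n, w => M.vn n w
    | .neg φ, w => tr M φ w
    | .conj φ ψ, w => fa M φ w ∨ fa M ψ w
    | .disj φ ψ, w => fa M φ w ∧ fa M ψ w
    | .box φ, w => ∃ w', M.R w w' ∧ fa M φ w'
    | .bbox φ, w => (∃ w', M.R w w' ∧ fa M φ w') ∨
        ∃ w₁ w₂, M.R w w₁ ∧ M.R w w₂ ∧ tr M φ w₁ ∧ ¬ tr M φ w₂
    | .ign φ, w => fa M φ w ∨ (∃ w', M.R w w' ∧ w' ≠ w ∧ tr M φ w') ∨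
        ∃ w₁ w₂, (M.R w w₁ ∧ w₁ ≠ w) ∧ (M.R w w₂ ∧ w₂ ≠ w) ∧ ¬ fa M φ w₁ ∧ fa M φ w₂
    | .tri φ, w => (∃ w₁ w₂, M.R w w₁ ∧ M.R w w₂ ∧ tr M φ w₁ ∧ ¬ tr M φ w₂) ∨
        (∃ w₁ w₂, M.R w w₁ ∧ M.R w w₂ ∧ fa M φ w₁ ∧ ¬ fa M φ w₂) ∨
        (∃ w₁ w₂, M.R w w₁ ∧ M.R w w₂ ∧ tr M φ w₁ ∧ fa M φ w₂)
end

/-- φ contains an occurrence of □ -/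
def hasBox : Form → Prop
  | .var _ => False
  | .neg φ => hasBox φ
  | .conj φ ψ => hasBox φ ∨ hasBox ψ
  | .disj φ ψ => hasBox φ ∨ hasBox ψ
  | .box _ => True
  | .bbox φ => hasBox φ
  | .ign φ => hasBox φ
  | .tri φ => hasBox φ

/-- φ contains an occurrence of ■ -/
def hasBBox : Form → Prop
  | .var _ => False
  | .neg φ => hasBBox φ
  | .conj φ ψ => hasBBox φ ∨ hasBBox ψ
  | .disj φ ψ => hasBBox φ ∨ hasBBox ψ
  | .box φ => hasBBox φ
  | .bbox _ => True
  | .ign φ => hasBBox φ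
  | .tri φ => hasBBox φ

/-- φ contains an occurrence of 𝐈 -/
def hasIgn : Form → Prop
  | .var _ => False
  | .neg φ => hasIgn φ
  | .conj φ ψ => hasIgn φ ∨ hasIgn ψ
  | .disj φ ψ => hasIgn φ ∨ hasIgn ψ
  | .box φ => hasIgn φ
  | .bbox φ => hasIgn φ
  | .ign _ => True
  | .tri φ => hasIgn φ

/-- φ contains an occurrence of ▲ -/
def hasTri : Form → Prop
  | .var _ => False
  | .neg φ => hasTri φ
  | .conj φ ψ => hasTri φ ∨ hasTri ψ
  | .disj φ ψ => hasTri φ ∨ hasTri ψ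
  | .box φ => hasTri φ
  | .bbox φ => hasTri φ
  | .ign φ => hasTri φ
  | .tri _ => True

/-- validity of the sequent φ ⊢ χ on the frame (W,R) -/
def validOn {W : Type} (R : W → W → Prop) (φ χ : Form) : Prop :=
  ∀ (vp vn : ℕ → W → Prop) (w : W), tr ⟨R, vp, vn⟩ φ w → tr ⟨R, vp, vn⟩ χ w

/-- ♦φ := ¬■¬φ -/
def dia (φ : Form) : Form := .neg (.bbox (.neg φ))

/-- the dual model: exactly true/exactly false values preserved, gluts and gaps swapped. -/
def dual {W : Type} (M : Model W) : Model W :=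
  ⟨M.R, fun n w => ¬ M.vn n w, fun n w => ¬ M.vp n w⟩


set_option maxHeartbeats 2000000 in
open Classical in
lemma dual_key {W : Type} (M : Model W) : ∀ φ : Form, ¬ hasBox φ → ¬ hasTri φ → ∀ w : W,
    (tr (dual M) φ w ↔ ¬ fa M φ w) ∧ (fa (dual M) φ w ↔ ¬ tr M φ w) := by
  intro φ
  induction φ with
  | var n => intro _ _ w; simp [tr, fa, dual]
  | neg φ ih =>
    intro h1 h2 w
    have := ih h1 h2 w
    simp only [tr, fa]
    tauto
  | conj φ ψ ihφ ihψ =>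
    intro h1 h2 w
    simp only [hasBox, hasTri, not_or] at h1 h2
    have a := ihφ h1.1 h2.1 w
    have b := ihψ h1.2 h2.2 w
    simp only [tr, fa]
    constructor
    · rw [a.1, b.1]; tauto
    · rw [a.2, b.2]; tauto
  | disj φ ψ ihφ ihψ =>
    intro h1 h2 w
    simp only [hasBox, hasTri, not_or] at h1 h2
    have a := ihφ h1.1 h2.1 w
    have b := ihψ h1.2 h2.2 w
    simp only [tr, fa]
    constructor
    · rw [a.1, b.1]; tauto
    · rw [a.2, b.2]; tauto
  | box φ ih => intro h1 _ _; exact absurd trivial h1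
  | tri φ ih => intro _ h2 _; exact absurd trivial h2
  | bbox φ ih =>
    intro h1 h2 w
    have ht : ∀ w', tr (dual M) φ w' ↔ ¬ fa M φ w' := fun w' => (ih h1 h2 w').1
    have hf : ∀ w', fa (dual M) φ w' ↔ ¬ tr M φ w' := fun w' => (ih h1 h2 w').2
    have RD : (dual M).R = M.R := rfl
    simp only [tr, fa, RD, ht, hf]
    constructor
    · constructor
      · rintro ⟨a, b⟩ (⟨w', hr, hfw⟩ | ⟨w₁, w₂, hr₁, hr₂, ht₁, hnt₂⟩)
        · exact a w' hr hfw
        · exact b w₂ w₁ hr₂ hr₁ hnt₂ ht₁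
      · intro h
        constructor
        · intro w' hr hfw; exact h (Or.inl ⟨w', hr, hfw⟩)
        · intro w₁ w₂ hr₁ hr₂ hnt₁ ht₂
          exact h (Or.inr ⟨w₂, w₁, hr₂, hr₁, ht₂, hnt₁⟩)
    · constructor
      · rintro (⟨w', hr, hnt⟩ | ⟨w₁, w₂, hr₁, hr₂, hnf₁, hnnf₂⟩) ⟨a, b⟩
        · exact hnt (a w' hr)
        · exact hnf₁ (b w₂ w₁ hr₂ hr₁ (not_not.mp hnnf₂))
      · intro h
        by_contra hc
        push_neg at hc
        obtain ⟨hc1, hc2⟩ := hc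
        apply h
        constructor
        · exact hc1
        · intro w₁ w₂ hr₁ hr₂ hf₁
          by_contra hnf₂
          exact hc2 w₂ w₁ hr₂ hr₁ hnf₂ hf₁
  | ign φ ih =>
    intro h1 h2 w
    have ht : ∀ w', tr (dual M) φ w' ↔ ¬ fa M φ w' := fun w' => (ih h1 h2 w').1
    have hf : ∀ w', fa (dual M) φ w' ↔ ¬ tr M φ w' := fun w' => (ih h1 h2 w').2
    have RD : (dual M).R = M.R := rfl
    simp only [tr, fa, RD, ht, hf]
    constructor
    · constructor
      · rintro ⟨a, b, c⟩ (hfw | ⟨w', hr, hne, htw'⟩ | ⟨w₁, w₂, ⟨hr₁, hne₁⟩, ⟨hr₂, hne₂⟩, hnf₁, hf₂⟩)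
        · exact a hfw
        · exact b w' hr hne htw'
        · exact c w₁ w₂ hr₁ hne₁ hr₂ hne₂ hnf₁ hf₂
      · intro h
        refine ⟨fun hfw => h (Or.inl hfw),
          fun w' hr hne htw' => h (Or.inr (Or.inl ⟨w', hr, hne, htw'⟩)),
          fun w₁ w₂ hr₁ hne₁ hr₂ hne₂ hnf₁ hf₂ =>
            h (Or.inr (Or.inr ⟨w₁, w₂, ⟨hr₁, hne₁⟩, ⟨hr₂, hne₂⟩, hnf₁, hf₂⟩))⟩
    · constructor
      · rintro (hnt | ⟨w', hr, hne, hnf⟩ | ⟨w₁, w₂, ⟨hr₁, hne₁⟩, ⟨hr₂, hne₂⟩, hnnt₁, hnt₂⟩) ⟨a, b, c⟩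
        · exact hnt a
        · exact hnf (b w' hr hne)
        · exact hnt₂ (c w₁ w₂ hr₁ hne₁ hr₂ hne₂ (not_not.mp hnnt₁))
      · intro h
        by_contra hc
        push_neg at hc
        obtain ⟨hc1, hc2, hc3⟩ := hc
        apply h
        exact ⟨hc1, fun w' hr hne => hc2 w' hr hne,
          fun w₁ w₂ hr₁ hne₁ hr₂ hne₂ ht₁ => hc3 w₁ w₂ ⟨hr₁, hne₁⟩ ⟨hr₂, hne₂⟩ ht₁⟩

/-- dual-model lemma for the language {¬,∧,∨,■,𝐈}. -/
theorem dual_model_lemma {W : Type} (M : Model W) (φ : Form)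
    (h1 : ¬ hasBox φ) (h2 : ¬ hasTri φ) (w : W) :
    (tr M φ w ∧ ¬ fa M φ w → tr (dual M) φ w ∧ ¬ fa (dual M) φ w) ∧
    (tr M φ w ∧ fa M φ w → ¬ tr (dual M) φ w ∧ ¬ fa (dual M) φ w) ∧
    (¬ tr M φ w ∧ ¬ fa M φ w → tr (dual M) φ w ∧ fa (dual M) φ w) ∧
    (¬ tr M φ w ∧ fa M φ w → ¬ tr (dual M) φ w ∧ fa (dual M) φ w) := by
  have k := dual_key M φ h1 h2 w
  rw [k.1, k.2]
  tauto
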